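/- arXiv:2106.00631 — 3 statements merged into one kernel-verified Lean document; each statement's English description precedes it below -/
import Mathlib

section
/- The set of minimal automorphisms of a spherically homogeneous rooted tree T is a single conjugacy class in Aut(T); in particular every minimal element of Aut(T) is conjugate to the standard odometer α_Σ. -/
/-- The boundary of the spherically homogeneous rooted tree with spherical
index `m`: infinite paths are sequences `x` with `x n ∈ {0, …, m n - 1}`. -/
abbrev Bd (m : ℕ → ℕ) : Type := ∀ n : ℕ, Fin (m n)

/-- A permutation of the boundary is a tree automorphism iff it preserves the
relation "agree on the first `N` coordinates" (i.e. it permutes each vertex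
level preserving the tree structure). -/
def IsTreeAut {m : ℕ → ℕ} (e : Equiv.Perm (Bd m)) : Prop :=
  ∀ (N : ℕ) (x y : Bd m), (∀ n < N, x n = y n) ↔ (∀ n < N, e x n = e y n)

/-- The automorphism group of the spherically homogeneous rooted tree with
spherical index `m`, realized as a subgroup of the permutations of the
boundary. -/
def treeAutGroup (m : ℕ → ℕ) : Subgroup (Equiv.Perm (Bd m)) where
  carrier := {e | IsTreeAut e}
  one_mem' := fun _ _ _ => Iff.rfl
  mul_mem' := by
    intro a b ha hb N x y
    exact (hb N x y).trans (ha N (b x) (b y))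
  inv_mem' := by
    intro a ha N x y
    have h := ha N (a⁻¹ x) (a⁻¹ y)
    simpa [Equiv.Perm.inv_def] using h.symm

/-- The orbit of `x` under the cyclic group generated by `a`. -/
def orbitZ {m : ℕ → ℕ} (a : Equiv.Perm (Bd m)) (x : Bd m) : Set (Bd m) :=
  {y | ∃ k : ℤ, (a ^ k) x = y}

/-- `a` acts transitively on every vertex level `V n` (vertices at level `n`
are identified with length-`n` prefixes of boundary points). -/
def LevelTransitive {m : ℕ → ℕ} (a : Equiv.Perm (Bd m)) : Prop :=
  ∀ (n : ℕ) (x y : Bd m), ∃ k : ℤ, ∀ i < n, ((a ^ k) x) i = y i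

/-- `f` belongs to the closure of the set `Γ` of tree automorphisms in the
profinite (= uniform) topology on `Aut(T)`: for every level `n` there is an
element of `Γ` agreeing with `f` up to level `n` everywhere. -/
def InClosure {m : ℕ → ℕ} (Γ : Set (Equiv.Perm (Bd m))) (f : Bd m → Bd m) : Prop :=
  ∀ n : ℕ, ∃ g ∈ Γ, ∀ x : Bd m, ∀ i < n, f x i = g x i

namespace Settled6

variable {m : ℕ → ℕ}

def Agree (m : ℕ → ℕ) (n : ℕ) (x y : Bd m) : Prop := ∀ i < n, x i = y i

lemma agree_mono {n n' : ℕ} (h : n ≤ n') {x y : Bd m} (H : Agree m n' x y) :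
    Agree m n x y := fun i hi => H i (lt_of_lt_of_le hi h)

lemma agree_symm {n : ℕ} {x y : Bd m} (H : Agree m n x y) : Agree m n y x :=
  fun i hi => (H i hi).symm

lemma agree_trans {n : ℕ} {x y z : Bd m} (H : Agree m n x y) (H' : Agree m n y z) :
    Agree m n x z := fun i hi => (H i hi).trans (H' i hi)

lemma aut_fwd {e : Equiv.Perm (Bd m)} (he : IsTreeAut e) {n : ℕ} {x y : Bd m}
    (h : Agree m n x y) : Agree m n (e x) (e y) := (he n x y).mp h

lemma aut_bwd {e : Equiv.Perm (Bd m)} (he : IsTreeAut e) {n : ℕ} {x y : Bd m}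
    (h : Agree m n (e x) (e y)) : Agree m n x y := (he n x y).mpr h

lemma mem_aut {e : Equiv.Perm (Bd m)} (he : e ∈ treeAutGroup m) : IsTreeAut e := he

lemma zpow_apply_zpow (p : Equiv.Perm (Bd m)) (i j : ℤ) (x : Bd m) :
    (p ^ i) ((p ^ j) x) = (p ^ (i + j)) x := by
  rw [← Equiv.Perm.mul_apply, ← zpow_add]

abbrev Lv (m : ℕ → ℕ) (n : ℕ) : Type := ∀ i : Fin n, Fin (m i)

def proj (n : ℕ) (x : Bd m) : Lv m n := fun i => x i

lemma agree_iff_proj {n : ℕ} {x y : Bd m} : Agree m n x y ↔ proj n x = proj n y := by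
  constructor
  · intro h; funext i; exact h i i.isLt
  · intro h i hi; exact congrFun h ⟨i, hi⟩

def sec (hm : ∀ n, 2 ≤ m n) (n : ℕ) (v : Lv m n) : Bd m :=
  fun i => if h : i < n then v ⟨i, h⟩ else ⟨0, lt_of_lt_of_le two_pos (hm i)⟩

lemma proj_sec (hm : ∀ n, 2 ≤ m n) (n : ℕ) (v : Lv m n) : proj n (sec hm n v) = v := by
  funext i; simp [proj, sec, i.isLt]

lemma agree_sec (hm : ∀ n, 2 ≤ m n) (n : ℕ) (x : Bd m) : Agree m n (sec hm n (proj n x)) x := by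
  intro i hi; simp [sec, proj, hi]

noncomputable def sig (hm : ∀ n, 2 ≤ m n) (e : Equiv.Perm (Bd m)) (he : e ∈ treeAutGroup m) (n : ℕ) : Equiv.Perm (Lv m n) :=
  Equiv.ofBijective (fun v => proj n (e (sec hm n v)))
    (Finite.injective_iff_bijective.mp (by
      intro v v' h
      have h1 : Agree m n (e (sec hm n v)) (e (sec hm n v')) := agree_iff_proj.mpr h
      have h2 := aut_bwd (mem_aut he) h1
      rw [← proj_sec hm n v, ← proj_sec hm n v']
      exact agree_iff_proj.mp h2))

lemma sig_proj (hm : ∀ n, 2 ≤ m n) (e : Equiv.Perm (Bd m)) (he : e ∈ treeAutGroup m) (n : ℕ) (x : Bd m) :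
    sig hm e he n (proj n x) = proj n (e x) := by
  show proj n (e (sec hm n (proj n x))) = proj n (e x)
  exact agree_iff_proj.mp (aut_fwd (mem_aut he) (agree_sec hm n x))

lemma sig_inv_proj (hm : ∀ n, 2 ≤ m n) (e : Equiv.Perm (Bd m)) (he : e ∈ treeAutGroup m) (n : ℕ) (x : Bd m) :
    (sig hm e he n)⁻¹ (proj n x) = proj n (e⁻¹ x) := by
  have := sig_proj hm e he n (e⁻¹ x)
  rw [show e (e⁻¹ x) = x from e.apply_symm_apply x] at this
  rw [← this]
  exact (Equiv.symm_apply_apply _ _)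

lemma sig_zpow (hm : ∀ n, 2 ≤ m n) (e : Equiv.Perm (Bd m)) (he : e ∈ treeAutGroup m) (n : ℕ) :
    ∀ (k : ℤ) (x : Bd m), ((sig hm e he n) ^ k) (proj n x) = proj n ((e ^ k) x) := by
  intro k
  induction k using Int.induction_on with
  | zero => intro x; simp
  | succ k ih =>
      intro x
      have h1 : ((k : ℤ) + 1) = 1 + k := by ring
      rw [h1, zpow_add, zpow_one, zpow_add, zpow_one, Equiv.Perm.mul_apply,
        Equiv.Perm.mul_apply, ih, sig_proj]
  | pred k ih =>
      intro x
      have h1 : (-(k : ℤ) - 1) = (-1) + (-k) := by ring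
      rw [h1, zpow_add, zpow_add, zpow_neg_one, zpow_neg_one, Equiv.Perm.mul_apply,
        Equiv.Perm.mul_apply, ih, sig_inv_proj]

lemma sig_trans (hm : ∀ n, 2 ≤ m n) (e : Equiv.Perm (Bd m)) (he : e ∈ treeAutGroup m)
    (hT : LevelTransitive e) (n : ℕ) (u v : Lv m n) :
    ∃ k : ℤ, ((sig hm e he n) ^ k) u = v := by
  obtain ⟨k, hk⟩ := hT n (sec hm n u) (sec hm n v)
  refine ⟨k, ?_⟩
  have h1 : Agree m n ((e ^ k) (sec hm n u)) (sec hm n v) := hk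
  have h2 := agree_iff_proj.mp h1
  rw [← sig_zpow hm e he n k (sec hm n u), proj_sec, proj_sec] at h2
  exact h2

lemma cycle_key {L : Type} [Fintype L] [Nonempty L] (σ : Equiv.Perm L)
    (htr : ∀ u v : L, ∃ k : ℤ, (σ ^ k) u = v) (k : ℤ) (u : L) :
    (σ ^ k) u = u ↔ (Fintype.card L : ℤ) ∣ k := by
  have hfix : ∀ (j : ℤ) (w : L), (σ ^ j) w = w → σ ^ j = 1 := by
    intro j w hw
    ext v
    obtain ⟨i, hi⟩ := htr w v
    have hcomm : (σ ^ j) ((σ ^ i) w) = (σ ^ i) ((σ ^ j) w) := by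
      rw [← Equiv.Perm.mul_apply, ← Equiv.Perm.mul_apply, ← zpow_add, ← zpow_add, add_comm]
    calc (σ ^ j) v = (σ ^ j) ((σ ^ i) w) := by rw [hi]
      _ = (σ ^ i) ((σ ^ j) w) := hcomm
      _ = (σ ^ i) w := by rw [hw]
      _ = v := hi
  obtain ⟨u₀⟩ := ‹Nonempty L›
  have hdpos : 0 < orderOf σ := orderOf_pos σ
  have hbij : Function.Bijective (fun j : Fin (orderOf σ) => (σ ^ (j : ℤ)) u₀) := by
    constructor
    · intro i j hij
      have hij' : (σ ^ ((i : ℕ) : ℤ)) u₀ = (σ ^ ((j : ℕ) : ℤ)) u₀ := hij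
      have h1 : (σ ^ ((i : ℤ) - (j : ℤ))) u₀ = u₀ := by
        have : (σ ^ (-(j : ℤ))) ((σ ^ (i : ℤ)) u₀) = (σ ^ (-(j : ℤ))) ((σ ^ (j : ℤ)) u₀) := by
          rw [hij']
        rw [← Equiv.Perm.mul_apply, ← Equiv.Perm.mul_apply, ← zpow_add, ← zpow_add] at this
        simpa [sub_eq_neg_add] using this
      have h2 : (orderOf σ : ℤ) ∣ (i : ℤ) - (j : ℤ) :=
        orderOf_dvd_iff_zpow_eq_one.mpr (hfix _ _ h1)
      have h3 : ((i : ℤ)) % (orderOf σ : ℤ) = ((j : ℤ)) % (orderOf σ : ℤ) :=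
        Int.ModEq.symm (Int.modEq_iff_dvd.mpr h2)
      have hi' : ((i : ℤ)) % (orderOf σ : ℤ) = (i : ℤ) :=
        Int.emod_eq_of_lt (by positivity) (by exact_mod_cast i.isLt)
      have hj' : ((j : ℤ)) % (orderOf σ : ℤ) = (j : ℤ) :=
        Int.emod_eq_of_lt (by positivity) (by exact_mod_cast j.isLt)
      have : (i : ℤ) = (j : ℤ) := by rw [← hi', ← hj', h3]
      exact Fin.ext (by exact_mod_cast this)
    · intro v
      obtain ⟨k', hk'⟩ := htr u₀ v
      have hd0 : (0 : ℤ) < (orderOf σ : ℤ) := by exact_mod_cast hdpos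
      have hr0 : 0 ≤ k' % (orderOf σ : ℤ) := Int.emod_nonneg k' (ne_of_gt hd0)
      have hrlt : k' % (orderOf σ : ℤ) < (orderOf σ : ℤ) := Int.emod_lt_of_pos k' hd0
      set r : ℤ := k' % (orderOf σ : ℤ) with hr
      have hdvd : (orderOf σ : ℤ) ∣ k' - r := Int.dvd_self_sub_of_emod_eq rfl
      have hone : σ ^ (k' - r) = 1 := by
        obtain ⟨c, hc⟩ := hdvd
        rw [hc, zpow_mul]
        have hoo : σ ^ ((orderOf σ : ℤ)) = 1 := by
          rw [zpow_natCast, pow_orderOf_eq_one]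
        rw [hoo, one_zpow]
      have hσ : σ ^ k' = σ ^ r := by
        have : σ ^ k' = σ ^ (k' - r) * σ ^ r := by rw [← zpow_add]; ring_nf
        rw [this, hone, one_mul]
      refine ⟨⟨r.toNat, ?_⟩, ?_⟩
      · have h5 : (r.toNat : ℤ) < (orderOf σ : ℤ) := by rwa [Int.toNat_of_nonneg hr0]
        exact_mod_cast h5
      · show (σ ^ ((r.toNat : ℤ))) u₀ = v
        rw [Int.toNat_of_nonneg hr0, ← hσ, hk']
  have hcard : (orderOf σ) = Fintype.card L := by
    have := Fintype.card_of_bijective hbij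
    simpa using this
  constructor
  · intro h
    rw [← hcard]
    exact orderOf_dvd_iff_zpow_eq_one.mpr (hfix _ _ h)
  · intro h
    have : σ ^ k = 1 := orderOf_dvd_iff_zpow_eq_one.mp (by rwa [hcard])
    rw [this]; rfl

lemma key (hm : ∀ n, 2 ≤ m n) (e : Equiv.Perm (Bd m)) (he : e ∈ treeAutGroup m) (hT : LevelTransitive e)
    (n : ℕ) (k : ℤ) (x : Bd m) :
    Agree m n ((e ^ k) x) x ↔ (Fintype.card (Lv m n) : ℤ) ∣ k := by
  haveI : Nonempty (Lv m n) := ⟨fun i => ⟨0, lt_of_lt_of_le two_pos (hm i)⟩⟩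
  rw [agree_iff_proj, ← sig_zpow hm e he n]
  exact cycle_key _ (sig_trans hm e he hT n) k (proj n x)

lemma sync (hm : ∀ n, 2 ≤ m n) (a b : Equiv.Perm (Bd m)) (ha : a ∈ treeAutGroup m) (hb : b ∈ treeAutGroup m)
    (hA : LevelTransitive a) (hB : LevelTransitive b) (x₀ y₀ : Bd m) (n : ℕ) {j j' : ℤ}
    (h : Agree m n ((a ^ j) x₀) ((a ^ j') x₀)) :
    Agree m n ((b ^ j) y₀) ((b ^ j') y₀) := by
  have h1 : Agree m n ((a ^ (j - j')) x₀) x₀ := by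
    have h2 := aut_fwd (mem_aut ((treeAutGroup m).zpow_mem ha (-j'))) h
    rw [zpow_apply_zpow, zpow_apply_zpow] at h2
    have e1 : -j' + j = j - j' := by ring
    have e2 : -j' + j' = 0 := by ring
    rw [e1, e2] at h2
    simpa using h2
  have hd := (key hm a ha hA n (j - j') x₀).mp h1
  have h2 : Agree m n ((b ^ (j - j')) ((b ^ j') y₀)) ((b ^ j') y₀) :=
    (key hm b hb hB n (j - j') _).mpr hd
  rw [zpow_apply_zpow] at h2
  have e3 : j - j' + j' = j := by ring
  rwa [e3] at h2

end Settled6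

/-- The set of minimal automorphisms of a spherically homogeneous rooted tree
is a single conjugacy class in `Aut(T)`: every conjugate (in `Aut(T)`) of a
minimal element is minimal, and any two minimal elements of `Aut(T)` are
conjugate by an element of `Aut(T)`. In particular every minimal element is
conjugate to the odometer. -/
theorem settled_stmt6 {m : ℕ → ℕ} (hm : ∀ n, 2 ≤ m n) :
    (∀ a w : Equiv.Perm (Bd m), a ∈ treeAutGroup m → w ∈ treeAutGroup m →
      LevelTransitive a → LevelTransitive (w * a * w⁻¹)) ∧
    (∀ a b : Equiv.Perm (Bd m), a ∈ treeAutGroup m → b ∈ treeAutGroup m →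
      LevelTransitive a → LevelTransitive b →
      ∃ w ∈ treeAutGroup m, w * a * w⁻¹ = b) := by
  classical
  constructor
  · -- conjugates of level-transitive elements are level-transitive
    intro a w ha hw hA n x y
    obtain ⟨k, hk⟩ := hA n (w⁻¹ x) (w⁻¹ y)
    refine ⟨k, ?_⟩
    have hconj : (w * a * w⁻¹) ^ k = w * a ^ k * w⁻¹ := by
      rw [← MulAut.conj_apply, ← map_zpow, MulAut.conj_apply]
    rw [hconj]
    have h1 : Settled6.Agree m n ((a ^ k) (w⁻¹ x)) (w⁻¹ y) := hk
    have h2 := Settled6.aut_fwd (Settled6.mem_aut hw) h1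
    intro i hi
    have h3 := h2 i hi
    simpa [Equiv.Perm.mul_apply] using h3
  · -- any two level-transitive tree automorphisms are conjugate in Aut(T)
    intro a b ha hb hA hB
    set x₀ : Bd m := fun i => ⟨0, lt_of_lt_of_le two_pos (hm i)⟩ with hx₀
    -- choice of "return times"
    have hA2 := hA
    have hB2 := hB
    choose ka hka using hA2
    choose kb hkb using hB2
    -- the intertwining map and its inverse
    set w₀ : Bd m → Bd m := fun x i => ((b ^ (ka (i + 1) x₀ x)) x₀) i with hw₀
    set v₀ : Bd m → Bd m := fun x i => ((a ^ (kb (i + 1) x₀ x)) x₀) i with hv₀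
    have hka' : ∀ (n : ℕ) (x : Bd m), Settled6.Agree m n ((a ^ (ka n x₀ x)) x₀) x :=
      fun n x => hka n x₀ x
    have hkb' : ∀ (n : ℕ) (x : Bd m), Settled6.Agree m n ((b ^ (kb n x₀ x)) x₀) x :=
      fun n x => hkb n x₀ x
    have wAgree : ∀ (x : Bd m) (n : ℕ),
        Settled6.Agree m n (w₀ x) ((b ^ (ka n x₀ x)) x₀) := by
      intro x n i hi
      show ((b ^ (ka (i + 1) x₀ x)) x₀) i = ((b ^ (ka n x₀ x)) x₀) i
      have h1 : Settled6.Agree m (i + 1) ((a ^ (ka (i + 1) x₀ x)) x₀) ((a ^ (ka n x₀ x)) x₀) :=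
        Settled6.agree_trans (hka' (i + 1) x)
          (Settled6.agree_symm (Settled6.agree_mono hi (hka' n x)))
      have h2 := Settled6.sync hm a b ha hb hA hB x₀ x₀ (i + 1) h1
      exact h2 i (Nat.lt_succ_self i)
    have vAgree : ∀ (x : Bd m) (n : ℕ),
        Settled6.Agree m n (v₀ x) ((a ^ (kb n x₀ x)) x₀) := by
      intro x n i hi
      show ((a ^ (kb (i + 1) x₀ x)) x₀) i = ((a ^ (kb n x₀ x)) x₀) i
      have h1 : Settled6.Agree m (i + 1) ((b ^ (kb (i + 1) x₀ x)) x₀) ((b ^ (kb n x₀ x)) x₀) :=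
        Settled6.agree_trans (hkb' (i + 1) x)
          (Settled6.agree_symm (Settled6.agree_mono hi (hkb' n x)))
      have h2 := Settled6.sync hm b a hb ha hB hA x₀ x₀ (i + 1) h1
      exact h2 i (Nat.lt_succ_self i)
    -- v₀ is a two-sided inverse of w₀
    have hleft : ∀ x, v₀ (w₀ x) = x := by
      intro x; funext i
      have h1 := vAgree (w₀ x) (i + 1)
      have h2 := hkb' (i + 1) (w₀ x)
      have h3 := wAgree x (i + 1)
      have h4 : Settled6.Agree m (i + 1) ((b ^ (kb (i + 1) x₀ (w₀ x))) x₀)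
          ((b ^ (ka (i + 1) x₀ x)) x₀) := Settled6.agree_trans h2 h3
      have h5 := Settled6.sync hm b a hb ha hB hA x₀ x₀ (i + 1) h4
      have h6 : Settled6.Agree m (i + 1) (v₀ (w₀ x)) x :=
        Settled6.agree_trans h1 (Settled6.agree_trans h5 (hka' (i + 1) x))
      exact h6 i (Nat.lt_succ_self i)
    have hright : ∀ x, w₀ (v₀ x) = x := by
      intro x; funext i
      have h1 := wAgree (v₀ x) (i + 1)
      have h2 := hka' (i + 1) (v₀ x)
      have h3 := vAgree x (i + 1)
      have h4 : Settled6.Agree m (i + 1) ((a ^ (ka (i + 1) x₀ (v₀ x))) x₀)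
          ((a ^ (kb (i + 1) x₀ x)) x₀) := Settled6.agree_trans h2 h3
      have h5 := Settled6.sync hm a b ha hb hA hB x₀ x₀ (i + 1) h4
      have h6 : Settled6.Agree m (i + 1) (w₀ (v₀ x)) x :=
        Settled6.agree_trans h1 (Settled6.agree_trans h5 (hkb' (i + 1) x))
      exact h6 i (Nat.lt_succ_self i)
    set w : Equiv.Perm (Bd m) := ⟨w₀, v₀, hleft, hright⟩ with hwdef
    have hwapp : ∀ x, w x = w₀ x := fun _ => rfl
    -- w is a tree automorphism
    have hwmem : w ∈ treeAutGroup m := by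
      intro N x y
      constructor
      · intro h
        have h1 : Settled6.Agree m N ((a ^ (ka N x₀ x)) x₀) ((a ^ (ka N x₀ y)) x₀) :=
          Settled6.agree_trans (hka' N x)
            (Settled6.agree_trans h (Settled6.agree_symm (hka' N y)))
        have h2 := Settled6.sync hm a b ha hb hA hB x₀ x₀ N h1
        have h3 : Settled6.Agree m N (w₀ x) (w₀ y) :=
          Settled6.agree_trans (wAgree x N)
            (Settled6.agree_trans h2 (Settled6.agree_symm (wAgree y N)))
        exact h3
      · intro h
        have h0 : Settled6.Agree m N (w₀ x) (w₀ y) := h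
        have h1 : Settled6.Agree m N ((b ^ (ka N x₀ x)) x₀) ((b ^ (ka N x₀ y)) x₀) :=
          Settled6.agree_trans (Settled6.agree_symm (wAgree x N))
            (Settled6.agree_trans h0 (wAgree y N))
        have h2 := Settled6.sync hm b a hb ha hB hA x₀ x₀ N h1
        have h3 : Settled6.Agree m N x y :=
          Settled6.agree_trans (Settled6.agree_symm (hka' N x))
            (Settled6.agree_trans h2 (hka' N y))
        exact h3
    refine ⟨w, hwmem, ?_⟩
    -- intertwining identity
    have hint : ∀ x, w₀ (a x) = b (w₀ x) := by
      intro x; funext i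
      have h1 := wAgree (a x) (i + 1)
      have h2 := hka' (i + 1) (a x)
      have h3 : Settled6.Agree m (i + 1) ((a ^ ((ka (i + 1) x₀ x) + 1)) x₀) (a x) := by
        have h4 := Settled6.aut_fwd (Settled6.mem_aut ha) (hka' (i + 1) x)
        have h5 : a ((a ^ (ka (i + 1) x₀ x)) x₀) = (a ^ ((ka (i + 1) x₀ x) + 1)) x₀ := by
          have h5' := Settled6.zpow_apply_zpow a 1 (ka (i + 1) x₀ x) x₀
          rw [zpow_one, Int.add_comm 1 (ka (i + 1) x₀ x)] at h5'
          exact h5'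
        rwa [h5] at h4
      have h6 : Settled6.Agree m (i + 1) ((a ^ (ka (i + 1) x₀ (a x))) x₀)
          ((a ^ ((ka (i + 1) x₀ x) + 1)) x₀) :=
        Settled6.agree_trans h2 (Settled6.agree_symm h3)
      have h7 := Settled6.sync hm a b ha hb hA hB x₀ x₀ (i + 1) h6
      have h8 : (b ^ ((ka (i + 1) x₀ x) + 1)) x₀ = b ((b ^ (ka (i + 1) x₀ x)) x₀) := by
        have h8' := Settled6.zpow_apply_zpow b 1 (ka (i + 1) x₀ x) x₀
        rw [zpow_one, Int.add_comm 1 (ka (i + 1) x₀ x)] at h8'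
        exact h8'.symm
      have h9 := Settled6.aut_fwd (Settled6.mem_aut hb) (wAgree x (i + 1))
      have h10 : Settled6.Agree m (i + 1) (w₀ (a x)) (b (w₀ x)) := by
        refine Settled6.agree_trans h1 (Settled6.agree_trans h7 ?_)
        rw [h8]
        exact Settled6.agree_symm h9
      exact h10 i (Nat.lt_succ_self i)
    have hwa : w * a = b * w := by
      apply Equiv.ext
      intro z
      rw [Equiv.Perm.mul_apply, Equiv.Perm.mul_apply]
      exact hint z
    calc w * a * w⁻¹ = b * w * w⁻¹ := by rw [mul_assoc, ← mul_assoc, hwa]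
      _ = b := by rw [mul_inv_cancel_right]
end

section
/- Let a be a minimal automorphism of a spherically homogeneous rooted tree T whose vertex levels have cardinalities p_n = m_1⋯m_n, and let k ≥ 1 be an integer. Then a^k is minimal if and only if gcd(k, p_n) = 1 for every n ≥ 1. -/
/-! ### Auxiliary machinery -/

section Aux

variable {m : ℕ → ℕ}

/-- Truncation of a boundary point to its length-`n` prefix. -/
def trunc11 (n : ℕ) (x : Bd m) : ∀ i : Fin n, Fin (m i) := fun i => x i

/-- Extension of a length-`n` prefix to a boundary point (by zeros). -/
def ext11 (hm : ∀ n, 2 ≤ m n) (n : ℕ) (v : ∀ i : Fin n, Fin (m i)) : Bd m :=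
  fun j => if h : j < n then v ⟨j, h⟩ else ⟨0, by have := hm j; omega⟩

lemma ext11_lt (hm : ∀ n, 2 ≤ m n) (n : ℕ) (v : ∀ i : Fin n, Fin (m i)) {j : ℕ}
    (hj : j < n) : ext11 hm n v j = v ⟨j, hj⟩ := by
  simp [ext11, hj]

lemma trunc11_ext11 (hm : ∀ n, 2 ≤ m n) (n : ℕ) (v : ∀ i : Fin n, Fin (m i)) :
    trunc11 n (ext11 hm n v) = v := by
  funext i
  simp [trunc11, ext11, i.isLt]

lemma semiconj_pow11 {α β : Type*} (σ : Equiv.Perm α) (τ : Equiv.Perm β) (t : β → α)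
    (h : ∀ x, t (τ x) = σ (t x)) : ∀ (j : ℕ) (x : β), t ((τ ^ j) x) = (σ ^ j) (t x)
  | 0, x => rfl
  | j + 1, x => by
      rw [pow_succ, pow_succ, Equiv.Perm.mul_apply, Equiv.Perm.mul_apply,
        semiconj_pow11 σ τ t h j (τ x), h]

lemma semiconj_zpow11 {α β : Type*} (σ : Equiv.Perm α) (τ : Equiv.Perm β) (t : β → α)
    (h : ∀ x, t (τ x) = σ (t x)) (z : ℤ) (x : β) : t ((τ ^ z) x) = (σ ^ z) (t x) := by
  have hinv : ∀ x, t (τ⁻¹ x) = σ⁻¹ (t x) := by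
    intro x
    have hx := h (τ⁻¹ x)
    rw [show τ (τ⁻¹ x) = x from τ.apply_symm_apply x] at hx
    rw [hx, show ∀ y, σ⁻¹ (σ y) = y from σ.symm_apply_apply]
  cases z with
  | ofNat j => simpa using semiconj_pow11 σ τ t h j x
  | negSucc j =>
      rw [zpow_negSucc, zpow_negSucc, ← inv_pow, ← inv_pow]
      exact semiconj_pow11 σ⁻¹ τ⁻¹ t hinv (j + 1) x

lemma trans_isCycle11 {S : Type*} [Fintype S] [DecidableEq S] (σ : Equiv.Perm S)
    (h2 : 2 ≤ Fintype.card S) (htr : ∀ v w : S, ∃ z : ℤ, (σ ^ z) v = w) :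
    σ.IsCycle ∧ orderOf σ = Fintype.card S := by
  have hmove : ∀ v : S, σ v ≠ v := by
    intro v hv
    obtain ⟨w, hw⟩ := Fintype.exists_ne_of_one_lt_card (by omega) v
    obtain ⟨z, hz⟩ := htr v w
    rw [Equiv.Perm.zpow_apply_eq_self_of_apply_eq_self hv] at hz
    exact hw hz.symm
  have hne : Nonempty S := Fintype.card_pos_iff.mp (by omega)
  obtain ⟨v⟩ := hne
  have hcyc : σ.IsCycle := ⟨v, hmove v, fun w _ => htr v w⟩
  have hsupp : σ.support = Finset.univ :=
    Finset.eq_univ_iff_forall.mpr fun u => Equiv.Perm.mem_support.mpr (hmove u)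
  refine ⟨hcyc, ?_⟩
  rw [hcyc.orderOf, hsupp, Finset.card_univ]

lemma key11 {S : Type*} [Fintype S] [DecidableEq S] (σ : Equiv.Perm S)
    (h2 : 2 ≤ Fintype.card S) (htr : ∀ v w : S, ∃ z : ℤ, (σ ^ z) v = w) (k : ℕ) :
    (∀ v w : S, ∃ z : ℤ, (σ ^ ((k : ℤ) * z)) v = w) ↔ Nat.Coprime k (Fintype.card S) := by
  obtain ⟨hcyc, hord⟩ := trans_isCycle11 σ h2 htr
  constructor
  · intro h
    have htr' : ∀ v w : S, ∃ z : ℤ, ((σ ^ k) ^ z) v = w := by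
      intro v w
      obtain ⟨z, hz⟩ := h v w
      exact ⟨z, by rwa [← zpow_natCast σ k, ← zpow_mul]⟩
    obtain ⟨_, hord'⟩ := trans_isCycle11 (σ ^ k) h2 htr'
    rw [orderOf_pow, hord] at hord'
    rcases Nat.div_eq_self.mp hord' with h0 | h1
    · omega
    · exact Nat.Coprime.symm h1
  · intro hcop v w
    obtain ⟨t, ht⟩ := htr v w
    have hσp : σ ^ ((Fintype.card S : ℕ) : ℤ) = 1 := by
      rw [zpow_natCast, ← hord, pow_orderOf_eq_one]
    have hco : IsCoprime (k : ℤ) ((Fintype.card S : ℕ) : ℤ) :=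
      Int.isCoprime_iff_gcd_eq_one.mpr (by simpa using hcop)
    obtain ⟨u, c, huc⟩ := hco
    refine ⟨u * t, ?_⟩
    have hz : (k : ℤ) * (u * t) = t + ((Fintype.card S : ℕ) : ℤ) * (-(c * t)) := by
      linear_combination t * huc
    rw [hz, zpow_add, zpow_mul, hσp, one_zpow, mul_one]
    exact ht

/-- The permutation induced by a tree automorphism on the `n`-th level. -/
noncomputable def levPerm (hm : ∀ n, 2 ≤ m n) (n : ℕ) (e : Equiv.Perm (Bd m))
    (he : IsTreeAut e) : Equiv.Perm (∀ i : Fin n, Fin (m i)) := by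
  refine Equiv.ofBijective (fun v => trunc11 n (e (ext11 hm n v)))
    (Finite.injective_iff_bijective.mp ?_)
  intro v w hvw
  have h1 : ∀ j < n, e (ext11 hm n v) j = e (ext11 hm n w) j := by
    intro j hj
    exact congrFun hvw ⟨j, hj⟩
  have h2 := (he n _ _).mpr h1
  funext i
  have h3 := h2 i i.isLt
  rw [ext11_lt hm n v i.isLt, ext11_lt hm n w i.isLt] at h3
  simpa using h3

lemma levPerm_trunc (hm : ∀ n, 2 ≤ m n) (n : ℕ) {e : Equiv.Perm (Bd m)}
    (he : IsTreeAut e) (x : Bd m) :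
    levPerm hm n e he (trunc11 n x) = trunc11 n (e x) := by
  have hagree : ∀ j < n, ext11 hm n (trunc11 n x) j = x j := by
    intro j hj
    rw [ext11_lt hm n _ hj]
    rfl
  have h := (he n (ext11 hm n (trunc11 n x)) x).mp hagree
  funext i
  exact h i i.isLt

end Aux

/-- Let `a` be a minimal automorphism of a spherically homogeneous rooted
tree whose vertex level `V n` has cardinality `p n = m 0 * ⋯ * m (n-1)`, and
let `k ≥ 1`. Then `a ^ k` is minimal if and only if `gcd (k, p n) = 1` for
every `n ≥ 1`. -/
theorem settled_stmt11 {m : ℕ → ℕ} (hm : ∀ n, 2 ≤ m n)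
    (a : Equiv.Perm (Bd m)) (ha : a ∈ treeAutGroup m) (hamin : LevelTransitive a)
    (k : ℕ) (hk : 1 ≤ k) :
    LevelTransitive (a ^ k) ↔ ∀ n : ℕ, Nat.Coprime k (∏ i ∈ Finset.range n, m i) := by
  have ha' : IsTreeAut a := ha
  -- card of level n
  have hcard : ∀ n : ℕ, Fintype.card (∀ i : Fin n, Fin (m i)) = ∏ i ∈ Finset.range n, m i := by
    intro n
    rw [Fintype.card_pi]
    simp [Fin.prod_univ_eq_prod_range (fun i => m i) n]
  have hcard2 : ∀ n : ℕ, 1 ≤ n → 2 ≤ Fintype.card (∀ i : Fin n, Fin (m i)) := by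
    intro n hn
    rw [hcard]
    calc (2 : ℕ) ≤ m 0 := hm 0
      _ ≤ ∏ i ∈ Finset.range n, m i :=
        Finset.single_le_prod' (fun i _ => by have := hm i; omega) (Finset.mem_range.mpr hn)
  -- semiconjugacy
  have hsc : ∀ n : ℕ, ∀ x : Bd m, trunc11 n (a x) = levPerm hm n a ha' (trunc11 n x) :=
    fun n x => (levPerm_trunc hm n ha' x).symm
  have hbr : ∀ (n : ℕ) (z : ℤ) (x : Bd m),
      trunc11 n ((a ^ z) x) = ((levPerm hm n a ha') ^ z) (trunc11 n x) :=
    fun n z x => semiconj_zpow11 (levPerm hm n a ha') a (trunc11 n) (hsc n) z x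
  -- transitivity of the induced permutation on each level
  have htr : ∀ n : ℕ, ∀ v w : (∀ i : Fin n, Fin (m i)),
      ∃ z : ℤ, ((levPerm hm n a ha') ^ z) v = w := by
    intro n v w
    obtain ⟨z, hz⟩ := hamin n (ext11 hm n v) (ext11 hm n w)
    refine ⟨z, ?_⟩
    have h1 := hbr n z (ext11 hm n v)
    rw [trunc11_ext11] at h1
    rw [← h1]
    funext i
    have h2 := hz i i.isLt
    show ((a ^ z) (ext11 hm n v)) i = w i
    rw [h2, ext11_lt hm n w i.isLt]
  have hpow : ∀ z : ℤ, ((a ^ k) ^ z) = a ^ ((k : ℤ) * z) := by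
    intro z
    rw [← zpow_natCast a k, ← zpow_mul]
  constructor
  · intro H n
    rcases Nat.eq_zero_or_pos n with rfl | hn
    · simp
    · have htrk : ∀ v w : (∀ i : Fin n, Fin (m i)),
          ∃ z : ℤ, ((levPerm hm n a ha') ^ ((k : ℤ) * z)) v = w := by
        intro v w
        obtain ⟨z, hz⟩ := H n (ext11 hm n v) (ext11 hm n w)
        refine ⟨z, ?_⟩
        have h1 := hbr n ((k : ℤ) * z) (ext11 hm n v)
        rw [trunc11_ext11] at h1
        rw [← h1]
        funext i
        have h2 := hz i i.isLt
        rw [hpow z] at h2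
        show ((a ^ ((k : ℤ) * z)) (ext11 hm n v)) i = w i
        rw [h2, ext11_lt hm n w i.isLt]
      have := (key11 (levPerm hm n a ha') (hcard2 n hn) (htr n) k).mp htrk
      rwa [hcard n] at this
  · intro H n x y
    rcases Nat.eq_zero_or_pos n with rfl | hn
    · exact ⟨0, fun i hi => absurd hi (Nat.not_lt_zero i)⟩
    · have hcop : Nat.Coprime k (Fintype.card (∀ i : Fin n, Fin (m i))) := by
        rw [hcard n]; exact H n
      obtain ⟨z, hz⟩ :=
        (key11 (levPerm hm n a ha') (hcard2 n hn) (htr n) k).mpr hcop (trunc11 n x) (trunc11 n y)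
      refine ⟨z, fun i hi => ?_⟩
      have h1 : trunc11 n ((a ^ ((k : ℤ) * z)) x) = trunc11 n y := by
        rw [hbr n]; exact hz
      have h2 : ((a ^ ((k : ℤ) * z)) x) i = y i := congrFun h1 ⟨i, hi⟩
      rw [hpow z]
      exact h2
end

section
/- An automorphism h of a d-ary rooted tree T is settled if and only if h^k is settled for every nonzero integer k; the same equivalence holds with 'settled' replaced by 'strongly settled'. -/
variable {d : ℕ}

/-- The vertex `v` (identified with any boundary point passing through it)
lies in a cycle of length `k` of the restriction of `σ` to the level-`n`
vertices of the `d`-ary tree. -/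
def InCycle (σ : Equiv.Perm (Bd (fun _ => d))) (n k : ℕ) (v : Bd (fun _ => d)) : Prop :=
  0 < k ∧ (∀ i < n, ((σ ^ k) v) i = v i) ∧
    ∀ j, 0 < j → j < k → ¬ (∀ i < n, ((σ ^ j) v) i = v i)

/-- `x` passes through a level-`n` vertex lying above the cycle of the
level-`n` vertex of `v`. -/
def AboveCycle (σ : Equiv.Perm (Bd (fun _ => d))) (n : ℕ) (v x : Bd (fun _ => d)) : Prop :=
  ∃ j : ℕ, ∀ i < n, x i = ((σ ^ j) v) i

/-- The vertex of `v` at level `n` lies in a *stable* cycle of length `k` of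
`σ`: it lies in a cycle of length `k`, and for every level `m > n` all the
vertices of level `m` lying above this cycle are in one single cycle of the
restriction of `σ` to level `m` (necessarily of length `d^(m-n) * k`). -/
def InStableCycle (σ : Equiv.Perm (Bd (fun _ => d))) (n k : ℕ) (v : Bd (fun _ => d)) : Prop :=
  InCycle σ n k v ∧
    ∀ mlev, n < mlev → ∀ x y : Bd (fun _ => d), AboveCycle σ n v x → AboveCycle σ n v y →
      ∃ t : ℕ, ∀ i < mlev, ((σ ^ t) x) i = y i

/-- A level-`n` vertex `w` of the `d`-ary tree is in a stable cycle of `σ`. -/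
def StableVertex (σ : Equiv.Perm (Bd (fun _ => d))) (n : ℕ) (w : Fin n → Fin d) : Prop :=
  ∃ v : Bd (fun _ => d), (∀ i : Fin n, v (i : ℕ) = w i) ∧ ∃ k : ℕ, InStableCycle σ n k v

/-- `σ` is settled: the proportion of level-`n` vertices lying in stable
cycles of `σ` tends to `1` as `n → ∞`. -/
def SettledAut (σ : Equiv.Perm (Bd (fun _ => d))) : Prop :=
  Filter.Tendsto
    (fun n : ℕ => (Nat.card {w : Fin n → Fin d // StableVertex σ n w} : ℝ) /
      (Fintype.card (Fin n → Fin d) : ℝ))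
    Filter.atTop (nhds 1)

/-- `σ` is strongly settled: from some level `n ≥ 1` on, every vertex lies in
a stable cycle of `σ`. -/
def StronglySettledAut (σ : Equiv.Perm (Bd (fun _ => d))) : Prop :=
  ∃ n : ℕ, 0 < n ∧ ∀ w : Fin n → Fin d, StableVertex σ n w

/-- A minimal component of the dynamical system `(∂T, σ)`: a nonempty closed
`σ`-invariant set on which every `σ`-orbit is dense. -/
def IsMinimalComponent (σ : Equiv.Perm (Bd (fun _ => d))) (X : Set (Bd (fun _ => d))) : Prop :=
  X.Nonempty ∧ IsClosed X ∧ ⇑σ '' X = X ∧ ∀ x ∈ X, closure (orbitZ σ x) = X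

namespace Settled17Aux

variable {d : ℕ}

/-- Agreement up to level `N`. -/
def Ag (N : ℕ) (x y : Bd (fun _ => d)) : Prop := ∀ i < N, x i = y i

lemma ag_refl (N : ℕ) (x : Bd (fun _ => d)) : Ag N x x := fun _ _ => rfl

lemma ag_symm {N : ℕ} {x y : Bd (fun _ => d)} (h : Ag N x y) : Ag N y x :=
  fun i hi => (h i hi).symm

lemma ag_trans {N : ℕ} {x y z : Bd (fun _ => d)} (h : Ag N x y) (h' : Ag N y z) : Ag N x z :=
  fun i hi => (h i hi).trans (h' i hi)

lemma ag_mono {N M : ℕ} (hNM : N ≤ M) {x y : Bd (fun _ => d)} (h : Ag M x y) : Ag N x y :=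
  fun i hi => h i (lt_of_lt_of_le hi hNM)

lemma mem_ag {g : Equiv.Perm (Bd (fun _ => d))} (hg : g ∈ treeAutGroup (fun _ => d))
    (N : ℕ) (x y : Bd (fun _ => d)) : Ag N x y ↔ Ag N (g x) (g y) := hg N x y

lemma ag_pow {σ : Equiv.Perm (Bd (fun _ => d))} (hσ : σ ∈ treeAutGroup (fun _ => d))
    (t : ℕ) {N : ℕ} {x y : Bd (fun _ => d)} (h : Ag N x y) :
    Ag N ((σ ^ t) x) ((σ ^ t) y) :=
  (mem_ag (pow_mem hσ t) N x y).mp h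

lemma ag_zpow {σ : Equiv.Perm (Bd (fun _ => d))} (hσ : σ ∈ treeAutGroup (fun _ => d))
    (z : ℤ) {N : ℕ} {x y : Bd (fun _ => d)} (h : Ag N x y) :
    Ag N ((σ ^ z) x) ((σ ^ z) y) :=
  (mem_ag (zpow_mem hσ z) N x y).mp h

lemma ag_pow_cancel {σ : Equiv.Perm (Bd (fun _ => d))} (hσ : σ ∈ treeAutGroup (fun _ => d))
    (t : ℕ) {N : ℕ} {x y : Bd (fun _ => d)} :
    Ag N ((σ ^ t) x) ((σ ^ t) y) ↔ Ag N x y :=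
  (mem_ag (pow_mem hσ t) N x y).symm

lemma pow_apply_add (σ : Equiv.Perm (Bd (fun _ => d))) (a b : ℕ) (x : Bd (fun _ => d)) :
    (σ ^ (a + b)) x = (σ ^ a) ((σ ^ b) x) := by
  rw [pow_add]; rfl

lemma zpow_apply_add (σ : Equiv.Perm (Bd (fun _ => d))) (a b : ℤ) (x : Bd (fun _ => d)) :
    (σ ^ (a + b)) x = (σ ^ a) ((σ ^ b) x) := by
  rw [zpow_add]; rfl

lemma ag_inv_left {g : Equiv.Perm (Bd (fun _ => d))} (hg : g ∈ treeAutGroup (fun _ => d))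
    {N : ℕ} {x y : Bd (fun _ => d)} : Ag N (g⁻¹ x) y ↔ Ag N x (g y) := by
  rw [mem_ag hg N (g⁻¹ x) y]
  simp [Equiv.Perm.inv_def]

/-- shift by a multiple of a period, natural exponents -/
lemma ag_shift {σ : Equiv.Perm (Bd (fun _ => d))} (hσ : σ ∈ treeAutGroup (fun _ => d))
    {N p : ℕ} {x : Bd (fun _ => d)} (hp : Ag N ((σ ^ p) x) x) (a q : ℕ) :
    Ag N ((σ ^ (a + p * q)) x) ((σ ^ a) x) := by
  induction q with
  | zero => simp [ag_refl]
  | succ q ih =>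
      have h1 : a + p * (q + 1) = (a + p * q) + p := by ring
      rw [h1, pow_apply_add]
      exact ag_trans (ag_pow hσ (a + p * q) hp) ih

/-- shift by a multiple of a period, integer exponents -/
lemma ag_shift_int {σ : Equiv.Perm (Bd (fun _ => d))} (hσ : σ ∈ treeAutGroup (fun _ => d))
    {N p : ℕ} {x : Bd (fun _ => d)} (hp : Ag N ((σ ^ p) x) x) (z q : ℤ) :
    Ag N ((σ ^ (z + (p : ℤ) * q)) x) ((σ ^ z) x) := by
  have hp' : Ag N ((σ ^ (p : ℤ)) x) x := by rw [zpow_natCast]; exact hp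
  induction q using Int.induction_on with
  | zero => simpa using ag_refl N ((σ ^ z) x)
  | succ q ih =>
      have h1 : z + (p : ℤ) * (q + 1) = (z + (p : ℤ) * q) + p := by ring
      rw [h1, zpow_apply_add]
      exact ag_trans (ag_zpow hσ (z + (p : ℤ) * q) hp') ih
  | pred q ih =>
      have h1 : z + (p : ℤ) * (-q - 1) = (z + (p : ℤ) * (-q)) + (-(p : ℤ)) := by ring
      rw [h1]
      refine ag_trans ?_ ih
      have h2 : Ag N ((σ ^ ((z + (p : ℤ) * (-q)) + (-(p:ℤ)))) ((σ ^ (p:ℤ)) x))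
          ((σ ^ ((z + (p : ℤ) * (-q)) + (-(p:ℤ)))) x) :=
        ag_zpow hσ _ hp'
      rw [← zpow_apply_add] at h2
      have h3 : (z + (p : ℤ) * (-q)) + (-(p:ℤ)) + (p:ℤ) = z + (p : ℤ) * (-q) := by ring
      rw [h3] at h2
      exact ag_symm h2

lemma exists_period {σ : Equiv.Perm (Bd (fun _ => d))} (hσ : σ ∈ treeAutGroup (fun _ => d))
    (N : ℕ) (x : Bd (fun _ => d)) : ∃ p, 0 < p ∧ Ag N ((σ ^ p) x) x := by
  have main : ∀ a b : ℕ, ((fun i : Fin N => ((σ ^ a) x) i) = fun i : Fin N => ((σ ^ b) x) i) →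
      a < b → ∃ p, 0 < p ∧ Ag N ((σ ^ p) x) x := by
    intro a b hab hlt
    have hag : Ag N ((σ ^ a) x) ((σ ^ b) x) := fun i hi => congrFun hab ⟨i, hi⟩
    refine ⟨b - a, by omega, ?_⟩
    have hab2 : b = a + (b - a) := by omega
    rw [hab2, pow_apply_add] at hag
    exact ag_symm ((ag_pow_cancel hσ a).mp hag)
  obtain ⟨a, b, hne, hab⟩ :=
    Finite.exists_ne_map_eq_of_infinite (fun t : ℕ => (fun i : Fin N => ((σ ^ t) x) i))
  rcases hne.lt_or_gt with hlt | hlt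
  · exact main a b hab hlt
  · exact main b a hab.symm hlt

lemma exists_inCycle {σ : Equiv.Perm (Bd (fun _ => d))} (hσ : σ ∈ treeAutGroup (fun _ => d))
    (N : ℕ) (x : Bd (fun _ => d)) : ∃ k, InCycle σ N k x := by
  have hex := exists_period hσ N x
  classical
  refine ⟨Nat.find hex, (Nat.find_spec hex).1, (Nat.find_spec hex).2, ?_⟩
  intro j hj hjk hag
  exact Nat.find_min hex hjk ⟨hj, hag⟩

lemma inCycle_dvd_int {σ : Equiv.Perm (Bd (fun _ => d))} (hσ : σ ∈ treeAutGroup (fun _ => d))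
    {N p : ℕ} {x : Bd (fun _ => d)} (hc : InCycle σ N p x) {z : ℤ}
    (hz : Ag N ((σ ^ z) x) x) : (p : ℤ) ∣ z := by
  obtain ⟨hp, hper, hmin⟩ := hc
  have hp0 : (p : ℤ) ≠ 0 := by exact_mod_cast hp.ne'
  set r : ℤ := z % (p : ℤ) with hr
  have hr0 : 0 ≤ r := Int.emod_nonneg z hp0
  have hrp : r < (p : ℤ) := Int.emod_lt_of_pos z (by exact_mod_cast hp)
  have hzr : z = r + (p : ℤ) * (z / (p : ℤ)) := by
    rw [hr]; rw [Int.emod_def]; ring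
  have h1 : Ag N ((σ ^ z) x) ((σ ^ r) x) := by
    rw [hzr]; exact ag_shift_int hσ hper r (z / (p : ℤ))
  have h2 : Ag N ((σ ^ r) x) x := ag_trans (ag_symm h1) hz
  have h3 : (σ ^ r) x = (σ ^ r.toNat) x := by
    rw [← zpow_natCast, Int.toNat_of_nonneg hr0]
  rw [h3] at h2
  by_cases h0 : r.toNat = 0
  · have : r = 0 := by omega
    rw [hr] at this
    exact Int.dvd_of_emod_eq_zero this
  · exact absurd h2 (hmin r.toNat (by omega) (by omega))

/-- If `c` divides some power of `d`, it divides `d ^ c`. -/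
lemma dvd_pow_self_of_dvd_pow {d : ℕ} (hd : 1 ≤ d) :
    ∀ c : ℕ, ∀ a : ℕ, c ∣ d ^ a → c ∣ d ^ c := by
  intro c
  induction c using Nat.strong_induction_on with
  | _ c IH =>
    intro a hca
    rcases Nat.lt_or_ge c 2 with hc2 | hc2
    · interval_cases c
      · exfalso; exact (Nat.pos_of_ne_zero (by positivity)).ne'
          (Nat.eq_zero_of_zero_dvd hca) |>.elim
      · exact one_dvd _
    · rcases Nat.eq_zero_or_pos a with rfl | ha
      · simp at hca; omega
      have hp : c.minFac.Prime := Nat.minFac_prime (by omega)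
      have hpd : c.minFac ∣ d := hp.dvd_of_dvd_pow ((Nat.minFac_dvd c).trans hca)
      set m := c / c.minFac with hm
      have hmc : m * c.minFac = c := Nat.div_mul_cancel (Nat.minFac_dvd c)
      have hmlt : m < c := Nat.div_lt_self (by omega) hp.two_le
      have hmdvd : m ∣ d ^ a := dvd_trans (Dvd.intro _ hmc) hca
      have hmm : m ∣ d ^ m := IH m hmlt a hmdvd
      have h1 : c ∣ d ^ m * d := by
        rw [← hmc]; exact mul_dvd_mul hmm hpd
      have h2 : d ^ m * d = d ^ (m + 1) := by rw [pow_succ]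
      have h3 : d ^ (m + 1) ∣ d ^ c := pow_dvd_pow d (by omega)
      exact dvd_trans (h1.trans (h2 ▸ dvd_refl _)) h3

lemma gcd_dvd_gcd_pow {d : ℕ} (hd : 1 ≤ d) {j : ℕ} (hj : 1 ≤ j) (k a : ℕ) :
    Nat.gcd j (k * d ^ a) ∣ Nat.gcd j (k * d ^ j) := by
  have hgj : Nat.gcd j (k * d ^ a) ∣ j := Nat.gcd_dvd_left _ _
  have hgm : Nat.gcd j (k * d ^ a) ∣ k * d ^ a := Nat.gcd_dvd_right _ _
  obtain ⟨g1, g2, h1, h2, hg⟩ := exists_dvd_and_dvd_of_dvd_mul hgm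
  have hg0 : Nat.gcd j (k * d ^ a) ≠ 0 := fun h => by
    have := Nat.eq_zero_of_gcd_eq_zero_left h; omega
  have hg2j : g2 ≤ j := by
    refine Nat.le_of_dvd (by omega) (dvd_trans ?_ hgj)
    exact hg ▸ Dvd.intro_left _ rfl
  have hg2 : g2 ∣ d ^ j :=
    dvd_trans (dvd_pow_self_of_dvd_pow hd g2 a h2) (pow_dvd_pow d hg2j)
  exact Nat.dvd_gcd hgj (hg ▸ mul_dvd_mul h1 hg2)
lemma ag_mod {σ : Equiv.Perm (Bd (fun _ => d))} (hσ : σ ∈ treeAutGroup (fun _ => d))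
    {n k : ℕ} {v : Bd (fun _ => d)} (hper : Ag n ((σ ^ k) v) v) (c : ℕ) :
    Ag n ((σ ^ c) v) ((σ ^ (c % k)) v) := by
  have := ag_shift hσ hper (c % k) (c / k)
  rwa [Nat.mod_add_div] at this

lemma cycle_distinct {σ : Equiv.Perm (Bd (fun _ => d))} (hσ : σ ∈ treeAutGroup (fun _ => d))
    {n k : ℕ} {v : Bd (fun _ => d)} (hc : InCycle σ n k v) {i i' : ℕ}
    (hi : i < k) (hi' : i' < k) (hag : Ag n ((σ ^ i) v) ((σ ^ i') v)) : i = i' := by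
  obtain ⟨hk, hper, hmin⟩ := hc
  have main : ∀ a b : ℕ, a < b → b < k → Ag n ((σ ^ a) v) ((σ ^ b) v) → False := by
    intro a b hab hbk hag
    have h2 : b = a + (b - a) := by omega
    rw [h2, pow_apply_add] at hag
    have h3 : Ag n ((σ ^ (b - a)) v) v := ag_symm ((ag_pow_cancel hσ a).mp hag)
    exact hmin (b - a) (by omega) (by omega) h3
  rcases lt_trichotomy i i' with hlt | heq | hlt
  · exact absurd (main i i' hlt hi' hag) not_false
  · exact heq
  · exact absurd (main i' i hlt hi (ag_symm hag)) not_false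

/-- Above a stable cycle of length `k` at level `n`, the minimal period of any
boundary point at level `m > n` equals `k * d ^ (m - n)`. -/
lemma period_eq (hd : 2 ≤ d) {σ : Equiv.Perm (Bd (fun _ => d))}
    (hσ : σ ∈ treeAutGroup (fun _ => d)) {n k : ℕ} {v : Bd (fun _ => d)}
    (hs : InStableCycle σ n k v) {m : ℕ} (hm : n < m) {x : Bd (fun _ => d)}
    (hx : AboveCycle σ n v x) {p : ℕ} (hc : InCycle σ m p x) :
    p = k * d ^ (m - n) := by
  classical
  obtain ⟨hck, hstab⟩ := hs
  have hk : 0 < k := hck.1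
  have hper : Ag n ((σ ^ k) v) v := hck.2.1
  obtain ⟨s, hsx⟩ := hx
  have hsx' : Ag n x ((σ ^ s) v) := hsx
  have hp : 0 < p := hc.1
  have hperp : Ag m ((σ ^ p) x) x := hc.2.1
  set P : (Fin m → Fin d) → Prop :=
    fun w => ∃ i, i < k ∧ ∀ l, (hl : l < n) → w ⟨l, hl.trans hm⟩ = ((σ ^ i) v) l with hP
  letI : DecidablePred P := Classical.decPred P
  -- first bijection : orbit of x
  have hFmem : ∀ t : ℕ, P (fun i : Fin m => ((σ ^ t) x) (i : ℕ)) := by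
    intro t
    refine ⟨(t + s) % k, Nat.mod_lt _ hk, ?_⟩
    intro l hl
    have h1 : Ag n ((σ ^ t) x) ((σ ^ (t + s)) v) := by
      have := ag_pow hσ t hsx'
      rwa [← pow_apply_add] at this
    have h2 : Ag n ((σ ^ (t + s)) v) ((σ ^ ((t + s) % k)) v) := ag_mod hσ hper (t + s)
    exact (ag_trans h1 h2) l hl
  set F : Fin p → {w : Fin m → Fin d // P w} :=
    fun t => ⟨fun i : Fin m => ((σ ^ (t : ℕ)) x) (i : ℕ), hFmem t⟩ with hF
  have hFinj : Function.Injective F := by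
    intro t t' heq
    have hval := congrArg Subtype.val heq
    have hag : Ag m ((σ ^ (t : ℕ)) x) ((σ ^ (t' : ℕ)) x) := by
      intro i hi
      exact congrFun hval ⟨i, hi⟩
    have hdist : ∀ a b : Fin p, a < b → Ag m ((σ ^ (a : ℕ)) x) ((σ ^ (b : ℕ)) x) → False := by
      intro a b hab hag
      have h2 : (b : ℕ) = (a : ℕ) + ((b : ℕ) - (a : ℕ)) := by omega
      rw [h2, pow_apply_add] at hag
      have h3 : Ag m ((σ ^ ((b : ℕ) - (a : ℕ))) x) x := ag_symm ((ag_pow_cancel hσ _).mp hag)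
      exact hc.2.2 _ (by omega) (by omega : (b : ℕ) - (a : ℕ) < p) h3
    rcases lt_trichotomy t t' with hlt | heq' | hlt
    · exact absurd (hdist t t' hlt hag) not_false
    · exact heq'
    · exact absurd (hdist t' t hlt (ag_symm hag)) not_false
  have hFsurj : Function.Surjective F := by
    rintro ⟨w, i, hik, hpre⟩
    set y : Bd (fun _ => d) := fun l => if hl : l < m then w ⟨l, hl⟩ else x l with hy
    have hay : AboveCycle σ n v y := by
      refine ⟨i, fun l hl => ?_⟩
      show (if hl' : l < m then w ⟨l, hl'⟩ else x l) = ((σ ^ i) v) l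
      rw [dif_pos (hl.trans hm)]
      exact hpre l hl
    have hax2 : AboveCycle σ n v x := ⟨s, hsx⟩
    obtain ⟨t, ht⟩ := hstab m hm x y hax2 hay
    have ht' : Ag m ((σ ^ t) x) y := ht
    refine ⟨⟨t % p, Nat.mod_lt _ hp⟩, ?_⟩
    apply Subtype.ext
    funext l
    show ((σ ^ (t % p)) x) (l : ℕ) = w l
    have h1 : Ag m ((σ ^ t) x) ((σ ^ (t % p)) x) := by
      have := ag_shift hσ hperp (t % p) (t / p)
      rwa [Nat.mod_add_div] at this
    have h2 : ((σ ^ (t % p)) x) (l : ℕ) = ((σ ^ t) x) (l : ℕ) :=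
      ((ag_symm h1) l l.isLt)
    rw [h2, ht' l l.isLt]
    show (if hl' : (l : ℕ) < m then w ⟨(l : ℕ), hl'⟩ else x (l : ℕ)) = w l
    rw [dif_pos l.isLt]
  have hcard1 : Fintype.card (Fin p) = Fintype.card {w : Fin m → Fin d // P w} :=
    Fintype.card_congr (Equiv.ofBijective F ⟨hFinj, hFsurj⟩)
  -- second bijection : counting
  set G2 : Fin k × (Fin (m - n) → Fin d) → {w : Fin m → Fin d // P w} :=
    fun iu => ⟨fun l : Fin m =>
      if hl : (l : ℕ) < n then ((σ ^ (iu.1 : ℕ)) v) (l : ℕ)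
      else iu.2 ⟨(l : ℕ) - n, by have := l.isLt; omega⟩,
      ⟨(iu.1 : ℕ), iu.1.isLt, fun l hl => dif_pos hl⟩⟩ with hG2
  have hG2inj : Function.Injective G2 := by
    rintro ⟨i, u⟩ ⟨i', u'⟩ heq
    have hval := congrArg Subtype.val heq
    have hagv : Ag n ((σ ^ (i : ℕ)) v) ((σ ^ (i' : ℕ)) v) := by
      intro l hl
      have h0 := congrFun hval ⟨l, hl.trans hm⟩
      have e1 : (G2 (i, u)).val ⟨l, hl.trans hm⟩ = ((σ ^ (i : ℕ)) v) l := dif_pos hl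
      have e2 : (G2 (i', u')).val ⟨l, hl.trans hm⟩ = ((σ ^ (i' : ℕ)) v) l := dif_pos hl
      rw [e1, e2] at h0
      exact h0
    have hii : i = i' := Fin.ext (cycle_distinct hσ hck i.isLt i'.isLt hagv)
    have huu : u = u' := by
      funext r
      have hptlt : n + (r : ℕ) < m := by have := r.isLt; omega
      have h0 := congrFun hval ⟨n + (r : ℕ), hptlt⟩
      have hcond : ¬ ((n + (r : ℕ)) < n) := by omega
      have hlt2 : n + (r : ℕ) - n < m - n := by have := r.isLt; omega
      have e1 : (G2 (i, u)).val ⟨n + (r : ℕ), hptlt⟩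
          = u ⟨n + (r : ℕ) - n, hlt2⟩ := dif_neg hcond
      have e2 : (G2 (i', u')).val ⟨n + (r : ℕ), hptlt⟩
          = u' ⟨n + (r : ℕ) - n, hlt2⟩ := dif_neg hcond
      have hfin : (⟨n + (r : ℕ) - n, hlt2⟩ : Fin (m - n)) = r :=
        Fin.ext (by simp)
      rw [e1, e2, hfin] at h0
      exact h0
    exact Prod.ext hii huu
  have hG2surj : Function.Surjective G2 := by
    rintro ⟨w, i, hik, hpre⟩
    refine ⟨(⟨i, hik⟩, fun r => w ⟨n + (r : ℕ), by have := r.isLt; omega⟩), ?_⟩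
    apply Subtype.ext
    funext l
    by_cases hl : (l : ℕ) < n
    · have e1 : (G2 (⟨i, hik⟩, fun r => w ⟨n + (r : ℕ), by have := r.isLt; omega⟩)).val l
          = ((σ ^ i) v) (l : ℕ) := dif_pos hl
      rw [e1]
      have := hpre (l : ℕ) hl
      have hfin : (⟨(l : ℕ), hl.trans hm⟩ : Fin m) = l := Fin.ext rfl
      rw [hfin] at this
      exact this.symm
    · have hlt2 : (l : ℕ) - n < m - n := by have := l.isLt; omega
      have e1 : (G2 (⟨i, hik⟩, fun r => w ⟨n + (r : ℕ), by have := r.isLt; omega⟩)).val l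
          = w ⟨n + ((l : ℕ) - n), by omega⟩ := dif_neg hl
      rw [e1]
      exact congrArg w (Fin.ext (by simp; omega))
  have hcard2 : Fintype.card (Fin k × (Fin (m - n) → Fin d)) =
      Fintype.card {w : Fin m → Fin d // P w} :=
    Fintype.card_congr (Equiv.ofBijective G2 ⟨hG2inj, hG2surj⟩)
  have hfinal : Fintype.card (Fin p) = Fintype.card (Fin k × (Fin (m - n) → Fin d)) := by
    rw [hcard1, hcard2]
  simpa [Fintype.card_fun] using hfinal
/-- Key lemma: every boundary point above a stable cycle of `σ` at level `n`
is in a stable cycle of `σ ^ j` at level `n + j`. -/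
lemma stable_pow (hd : 2 ≤ d) {σ : Equiv.Perm (Bd (fun _ => d))}
    (hσ : σ ∈ treeAutGroup (fun _ => d)) {j : ℕ} (hj : 1 ≤ j) {n k : ℕ}
    {v : Bd (fun _ => d)} (hs : InStableCycle σ n k v) {x : Bd (fun _ => d)}
    (hx : AboveCycle σ n v x) : ∃ k', InStableCycle (σ ^ j) (n + j) k' x := by
  have hσj : σ ^ j ∈ treeAutGroup (fun _ => d) := pow_mem hσ j
  obtain ⟨k', hck'⟩ := exists_inCycle hσj (n + j) x
  refine ⟨k', hck', ?_⟩
  intro m hm x' y' hax' hay'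
  have hk : 0 < k := hs.1.1
  obtain ⟨s, hsx⟩ := hx
  have hsx' : Ag n x ((σ ^ s) v) := hsx
  obtain ⟨a, hax⟩ := hax'
  obtain ⟨b, hay⟩ := hay'
  have hax2 : Ag (n + j) x' ((σ ^ (j * a)) x) := by
    intro i hi
    have := hax i hi
    rwa [← pow_mul] at this
  have hay2 : Ag (n + j) y' ((σ ^ (j * b)) x) := by
    intro i hi
    have := hay i hi
    rwa [← pow_mul] at this
  -- x' and y' are above the σ-cycle of v at level n
  have habove : ∀ (z' : Bd (fun _ => d)) (c : ℕ), Ag (n + j) z' ((σ ^ c) x) →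
      AboveCycle σ n v z' := by
    intro z' c hz
    refine ⟨c + s, fun i hi => ?_⟩
    have h1 : Ag n z' ((σ ^ c) x) := ag_mono (by omega) hz
    have h2 : Ag n ((σ ^ c) x) ((σ ^ (c + s)) v) := by
      have := ag_pow hσ c hsx'
      rwa [← pow_apply_add] at this
    exact (ag_trans h1 h2) i hi
  have haxv : AboveCycle σ n v x' := habove x' (j * a) hax2
  have hayv : AboveCycle σ n v y' := habove y' (j * b) hay2
  -- transitivity of σ at level m
  obtain ⟨s₁, hs₁⟩ := hs.2 m (by omega) x' y' haxv hayv
  have hs₁' : Ag m ((σ ^ s₁) x') y' := hs₁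
  -- minimal periods of x' at levels n+j and m
  obtain ⟨pN, hcN⟩ := exists_inCycle hσ (n + j) x'
  obtain ⟨pm, hcm⟩ := exists_inCycle hσ m x'
  have hpNval : pN = k * d ^ j := by
    have := period_eq hd hσ hs (by omega : n < n + j) haxv hcN
    simpa using this
  have hpmval : pm = k * d ^ (m - n) := period_eq hd hσ hs (by omega : n < m) haxv hcm
  -- integer bookkeeping
  set z : ℤ := (j : ℤ) * b - (j : ℤ) * a with hz
  have hagz : Ag (n + j) ((σ ^ z) x') y' := by
    have h1 : Ag (n + j) ((σ ^ z) x') ((σ ^ z) ((σ ^ ((j * a : ℕ) : ℤ)) x)) := by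
      apply ag_zpow hσ z
      rwa [zpow_natCast]
    have h2 : (σ ^ z) ((σ ^ ((j * a : ℕ) : ℤ)) x) = (σ ^ ((j * b : ℕ) : ℤ)) x := by
      rw [← zpow_apply_add]
      exact congrArg (fun e : ℤ => (σ ^ e) x) (by rw [hz]; push_cast; ring)
    rw [h2, zpow_natCast] at h1
    exact ag_trans h1 (ag_symm hay2)
  have hagsz : Ag (n + j) ((σ ^ ((s₁ : ℤ) - z)) x') x' := by
    have h1 : Ag (n + j) ((σ ^ (s₁ : ℤ)) x') ((σ ^ z) x') := by
      have h2 : Ag (n + j) ((σ ^ (s₁ : ℤ)) x') y' := by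
        rw [zpow_natCast]; exact ag_mono (by omega) hs₁'
      exact ag_trans h2 (ag_symm hagz)
    have h3 := ag_zpow hσ (-z) h1
    rw [← zpow_apply_add, ← zpow_apply_add] at h3
    have h4 : -z + (s₁ : ℤ) = (s₁ : ℤ) - z := by ring
    have h5 : -z + z = 0 := by ring
    rw [h4, h5] at h3
    simpa using h3
  have hdvd1 : (pN : ℤ) ∣ ((s₁ : ℤ) - z) := inCycle_dvd_int hσ hcN hagsz
  -- gcd divisibility
  have hgd : Nat.gcd j pm ∣ Nat.gcd j pN := by
    rw [hpmval, hpNval]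
    exact gcd_dvd_gcd_pow (by omega) hj k (m - n)
  have hgs : (Nat.gcd j pm : ℤ) ∣ (s₁ : ℤ) := by
    have h2 : (Nat.gcd j pN : ℤ) ∣ ((s₁ : ℤ) - z) :=
      dvd_trans (Int.natCast_dvd_natCast.mpr (Nat.gcd_dvd_right _ _)) hdvd1
    have h3 : (Nat.gcd j pN : ℤ) ∣ z := by
      refine dvd_trans (Int.natCast_dvd_natCast.mpr (Nat.gcd_dvd_left _ _)) ?_
      exact ⟨(b : ℤ) - (a : ℤ), by rw [hz]; ring⟩
    have h4 : (Nat.gcd j pN : ℤ) ∣ (s₁ : ℤ) := by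
      have := dvd_add h2 h3
      simpa using this
    exact dvd_trans (Int.natCast_dvd_natCast.mpr hgd) h4
  -- Bezout: find natural numbers t, u with j * t = s₁ + pm * u
  obtain ⟨c, hc⟩ := hgs
  set T : ℤ := Nat.gcdA j pm * c with hT
  set U : ℤ := Nat.gcdB j pm * c with hU
  have key : (j : ℤ) * T + (pm : ℤ) * U = (s₁ : ℤ) := by
    rw [hT, hU, hc, Nat.gcd_eq_gcd_ab j pm]
    ring
  have hpm0 : 0 < pm := hcm.1
  have hpm1 : (1 : ℤ) ≤ (pm : ℤ) := by exact_mod_cast hpm0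
  have hj1 : (1 : ℤ) ≤ (j : ℤ) := by exact_mod_cast hj
  set M : ℕ := T.natAbs + U.natAbs with hM
  have hT0 : 0 ≤ T + (pm : ℤ) * M := by
    have h2 : (M : ℤ) ≤ (pm : ℤ) * M := le_mul_of_one_le_left (Int.natCast_nonneg M) hpm1
    have h3 : -(T.natAbs : ℤ) ≤ T := by omega
    have h4 : (T.natAbs : ℤ) ≤ (M : ℤ) := by omega
    omega
  have hU0 : 0 ≤ (j : ℤ) * M - U := by
    have h2 : (M : ℤ) ≤ (j : ℤ) * M := le_mul_of_one_le_left (Int.natCast_nonneg M) hj1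
    have h3 : U ≤ (U.natAbs : ℤ) := by omega
    have h4 : (U.natAbs : ℤ) ≤ (M : ℤ) := by omega
    omega
  set t : ℕ := (T + (pm : ℤ) * M).toNat with ht
  set u : ℕ := ((j : ℤ) * M - U).toNat with hu
  have ht' : (t : ℤ) = T + (pm : ℤ) * M := by rw [ht, Int.toNat_of_nonneg hT0]
  have hu' : (u : ℤ) = (j : ℤ) * M - U := by rw [hu, Int.toNat_of_nonneg hU0]
  have heq : j * t = s₁ + pm * u := by
    have h1 : ((j * t : ℕ) : ℤ) = ((s₁ + pm * u : ℕ) : ℤ) := by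
      push_cast
      rw [ht', hu']
      linear_combination key
    exact_mod_cast h1
  refine ⟨t, ?_⟩
  have hfin : Ag m (((σ ^ j) ^ t) x') y' := by
    have h1 : ((σ ^ j) ^ t) x' = (σ ^ (j * t)) x' := by rw [← pow_mul]
    rw [h1, heq]
    have h2 : Ag m ((σ ^ (s₁ + pm * u)) x') ((σ ^ s₁) x') :=
      ag_shift hσ hcm.2.1 s₁ u
    exact ag_trans h2 hs₁'
  exact hfin
lemma inCycle_inv {σ : Equiv.Perm (Bd (fun _ => d))} (hσ : σ ∈ treeAutGroup (fun _ => d))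
    {n k : ℕ} {v : Bd (fun _ => d)} (hc : InCycle σ n k v) : InCycle σ⁻¹ n k v := by
  obtain ⟨hk, hper, hmin⟩ := hc
  have key : ∀ t : ℕ, Ag n ((σ⁻¹ ^ t) v) v ↔ Ag n ((σ ^ t) v) v := by
    intro t
    rw [inv_pow, ag_inv_left (pow_mem hσ t)]
    exact ⟨fun h => ag_symm h, fun h => ag_symm h⟩
  exact ⟨hk, (key k).mpr hper, fun j hj hjk hag => hmin j hj hjk ((key j).mp hag)⟩

/-- From an integer-exponent agreement one can always pick a natural exponent. -/
lemma above_of_int {σ : Equiv.Perm (Bd (fun _ => d))} (hσ : σ ∈ treeAutGroup (fun _ => d))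
    {n k : ℕ} {v : Bd (fun _ => d)} (hk : 0 < k) (hper : Ag n ((σ ^ k) v) v)
    {x : Bd (fun _ => d)} (z : ℤ) (hxz : Ag n x ((σ ^ z) v)) : AboveCycle σ n v x := by
  set q : ℤ := (z.natAbs : ℤ) with hq
  have hk1 : (1 : ℤ) ≤ (k : ℤ) := by exact_mod_cast hk
  have hnn : 0 ≤ z + (k : ℤ) * q := by
    have h1 : -q ≤ z := by rw [hq]; omega
    nlinarith
  set c : ℕ := (z + (k : ℤ) * q).toNat with hc
  have hc' : ((c : ℕ) : ℤ) = z + (k : ℤ) * q := by rw [hc, Int.toNat_of_nonneg hnn]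
  refine ⟨c, fun i hi => ?_⟩
  have hsh : Ag n ((σ ^ (z + (k : ℤ) * q)) v) ((σ ^ z) v) := ag_shift_int hσ hper z q
  have h2 : (σ ^ (z + (k : ℤ) * q)) v = (σ ^ c) v := by
    rw [← hc', zpow_natCast]
  rw [h2] at hsh
  exact (ag_trans hxz (ag_symm hsh)) i hi

lemma zpow_inv_apply (σ : Equiv.Perm (Bd (fun _ => d))) (z : ℤ) (v : Bd (fun _ => d)) :
    (σ⁻¹ ^ z) v = (σ ^ (-z)) v := by
  rw [inv_zpow, ← zpow_neg]

lemma aboveCycle_inv {σ : Equiv.Perm (Bd (fun _ => d))} (hσ : σ ∈ treeAutGroup (fun _ => d))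
    {n k : ℕ} {v : Bd (fun _ => d)} (hc : InCycle σ n k v)
    {x : Bd (fun _ => d)} : AboveCycle σ⁻¹ n v x ↔ AboveCycle σ n v x := by
  have hk : 0 < k := hc.1
  have hper : Ag n ((σ ^ k) v) v := hc.2.1
  have hperi : Ag n ((σ⁻¹ ^ k) v) v := (inCycle_inv hσ hc).2.1
  constructor
  · rintro ⟨a, ha⟩
    have ha' : Ag n x ((σ ^ (-(a : ℤ))) v) := by
      have h1 : (σ⁻¹ ^ a) v = (σ ^ (-(a : ℤ))) v := by
        rw [← zpow_natCast σ⁻¹, zpow_inv_apply]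
      rw [← h1]
      exact ha
    exact above_of_int hσ hk hper (-(a : ℤ)) ha'
  · rintro ⟨a, ha⟩
    have ha' : Ag n x ((σ⁻¹ ^ (-(a : ℤ))) v) := by
      have h1 : (σ⁻¹ ^ (-(a : ℤ))) v = (σ ^ (a : ℤ)) v := by
        rw [zpow_inv_apply, neg_neg]
      rw [h1, zpow_natCast]
      exact ha
    exact above_of_int (inv_mem hσ) hk hperi (-(a : ℤ)) ha'

lemma inStableCycle_inv {σ : Equiv.Perm (Bd (fun _ => d))}
    (hσ : σ ∈ treeAutGroup (fun _ => d)) {n k : ℕ} {v : Bd (fun _ => d)}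
    (hs : InStableCycle σ n k v) : InStableCycle σ⁻¹ n k v := by
  obtain ⟨hc, hstab⟩ := hs
  refine ⟨inCycle_inv hσ hc, ?_⟩
  intro m hm x y hax hay
  rw [aboveCycle_inv hσ hc] at hax hay
  obtain ⟨s, hs'⟩ := hstab m hm y x hay hax
  have hs'' : Ag m ((σ ^ s) y) x := hs'
  refine ⟨s, ?_⟩
  have h1 : Ag m ((σ⁻¹ ^ s) x) y := by
    rw [inv_pow, ag_inv_left (pow_mem hσ s)]
    exact ag_symm hs''
  exact h1

lemma stableVertex_inv {σ : Equiv.Perm (Bd (fun _ => d))}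
    (hσ : σ ∈ treeAutGroup (fun _ => d)) {n : ℕ} {w : Fin n → Fin d} :
    StableVertex σ n w ↔ StableVertex σ⁻¹ n w := by
  constructor
  · rintro ⟨v, hv, k, hk⟩
    exact ⟨v, hv, k, inStableCycle_inv hσ hk⟩
  · rintro ⟨v, hv, k, hk⟩
    refine ⟨v, hv, k, ?_⟩
    have := inStableCycle_inv (inv_mem hσ) hk
    rwa [inv_inv] at this

lemma settledAut_inv {σ : Equiv.Perm (Bd (fun _ => d))}
    (hσ : σ ∈ treeAutGroup (fun _ => d)) (hset : SettledAut σ) : SettledAut σ⁻¹ := by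
  unfold SettledAut at hset ⊢
  have hfun : ∀ n : ℕ, Nat.card {w : Fin n → Fin d // StableVertex σ n w}
      = Nat.card {w : Fin n → Fin d // StableVertex σ⁻¹ n w} := by
    intro n
    exact Nat.card_congr (Equiv.subtypeEquivRight (fun w => stableVertex_inv hσ))
  have : (fun n : ℕ => (Nat.card {w : Fin n → Fin d // StableVertex σ⁻¹ n w} : ℝ) /
      (Fintype.card (Fin n → Fin d) : ℝ))
      = (fun n : ℕ => (Nat.card {w : Fin n → Fin d // StableVertex σ n w} : ℝ) /
      (Fintype.card (Fin n → Fin d) : ℝ)) := by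
    funext n
    rw [hfun n]
  rw [this]
  exact hset

lemma stronglySettledAut_inv {σ : Equiv.Perm (Bd (fun _ => d))}
    (hσ : σ ∈ treeAutGroup (fun _ => d)) (hset : StronglySettledAut σ) :
    StronglySettledAut σ⁻¹ := by
  obtain ⟨n, hn, hall⟩ := hset
  exact ⟨n, hn, fun w => (stableVertex_inv hσ).mp (hall w)⟩
lemma stableVertex_pow (hd : 2 ≤ d) {σ : Equiv.Perm (Bd (fun _ => d))}
    (hσ : σ ∈ treeAutGroup (fun _ => d)) {j : ℕ} (hj : 1 ≤ j) {n : ℕ}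
    {w0 : Fin n → Fin d} (hw : StableVertex σ n w0) (w : Fin (n + j) → Fin d)
    (hext : ∀ i : Fin n, w ⟨(i : ℕ), by have := i.isLt; omega⟩ = w0 i) :
    StableVertex (σ ^ j) (n + j) w := by
  obtain ⟨v, hv, k, hk⟩ := hw
  set x : Bd (fun _ => d) := fun l => if hl : l < n + j then w ⟨l, hl⟩ else v l with hx
  have hax : AboveCycle σ n v x := by
    refine ⟨0, fun i hi => ?_⟩
    have h1 : x i = w ⟨i, by omega⟩ := dif_pos (by omega)
    rw [h1]
    have h2 : w ⟨i, by omega⟩ = w0 ⟨i, hi⟩ := hext ⟨i, hi⟩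
    rw [h2, pow_zero]
    have := hv ⟨i, hi⟩
    simpa using this.symm
  obtain ⟨k', hk'⟩ := stable_pow hd hσ hj hk hax
  refine ⟨x, fun i => dif_pos i.isLt, k', hk'⟩

lemma stronglySettled_pow (hd : 2 ≤ d) {σ : Equiv.Perm (Bd (fun _ => d))}
    (hσ : σ ∈ treeAutGroup (fun _ => d)) {j : ℕ} (hj : 1 ≤ j)
    (hset : StronglySettledAut σ) : StronglySettledAut (σ ^ j) := by
  obtain ⟨n, hn, hall⟩ := hset
  refine ⟨n + j, by omega, fun w => ?_⟩
  exact stableVertex_pow hd hσ hj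
    (hall (fun i : Fin n => w ⟨(i : ℕ), by have := i.isLt; omega⟩)) w (fun i => rfl)

lemma card_le_pow (hd : 2 ≤ d) {σ : Equiv.Perm (Bd (fun _ => d))}
    (hσ : σ ∈ treeAutGroup (fun _ => d)) {j : ℕ} (hj : 1 ≤ j) (n : ℕ) :
    Nat.card {w : Fin n → Fin d // StableVertex σ n w} * d ^ j ≤
      Nat.card {w : Fin (n + j) → Fin d // StableVertex (σ ^ j) (n + j) w} := by
  classical
  set f : {w : Fin n → Fin d // StableVertex σ n w} × (Fin j → Fin d) →
      {w : Fin (n + j) → Fin d // StableVertex (σ ^ j) (n + j) w} :=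
    fun wu => ⟨fun l : Fin (n + j) =>
        if hl : (l : ℕ) < n then wu.1.1 ⟨(l : ℕ), hl⟩
        else wu.2 ⟨(l : ℕ) - n, by have := l.isLt; omega⟩,
      stableVertex_pow hd hσ hj wu.1.2 _ (fun i => dif_pos i.isLt)⟩ with hf
  have hinj : Function.Injective f := by
    rintro ⟨⟨w, hw⟩, u⟩ ⟨⟨w', hw'⟩, u'⟩ heq
    have hval := congrArg Subtype.val heq
    have h1 : w = w' := by
      funext i
      have h0 := congrFun hval ⟨(i : ℕ), by have := i.isLt; omega⟩
      have e1 : (f (⟨w, hw⟩, u)).val ⟨(i : ℕ), by have := i.isLt; omega⟩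
          = w ⟨(i : ℕ), i.isLt⟩ := dif_pos i.isLt
      have e2 : (f (⟨w', hw'⟩, u')).val ⟨(i : ℕ), by have := i.isLt; omega⟩
          = w' ⟨(i : ℕ), i.isLt⟩ := dif_pos i.isLt
      rw [e1, e2] at h0
      simpa using h0
    have h2 : u = u' := by
      funext r
      have hptlt : n + (r : ℕ) < n + j := by have := r.isLt; omega
      have hcond : ¬ ((n + (r : ℕ)) < n) := by omega
      have hlt2 : n + (r : ℕ) - n < j := by have := r.isLt; omega
      have h0 := congrFun hval ⟨n + (r : ℕ), hptlt⟩
      have e1 : (f (⟨w, hw⟩, u)).val ⟨n + (r : ℕ), hptlt⟩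
          = u ⟨n + (r : ℕ) - n, hlt2⟩ := dif_neg hcond
      have e2 : (f (⟨w', hw'⟩, u')).val ⟨n + (r : ℕ), hptlt⟩
          = u' ⟨n + (r : ℕ) - n, hlt2⟩ := dif_neg hcond
      rw [e1, e2] at h0
      have hfin : (⟨n + (r : ℕ) - n, hlt2⟩ : Fin j) = r := Fin.ext (by simp)
      rwa [hfin] at h0
    exact Prod.ext (Subtype.ext h1) h2
  have hle := Nat.card_le_card_of_injective f hinj
  rw [Nat.card_prod] at hle
  have hcard : Nat.card (Fin j → Fin d) = d ^ j := by
    simp [Nat.card_eq_fintype_card]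
  rwa [hcard] at hle

lemma settled_pow (hd : 2 ≤ d) {σ : Equiv.Perm (Bd (fun _ => d))}
    (hσ : σ ∈ treeAutGroup (fun _ => d)) {j : ℕ} (hj : 1 ≤ j)
    (hset : SettledAut σ) : SettledAut (σ ^ j) := by
  unfold SettledAut at hset ⊢
  set a : ℕ → ℝ := fun n => (Nat.card {w : Fin n → Fin d // StableVertex σ n w} : ℝ) /
      (Fintype.card (Fin n → Fin d) : ℝ) with ha
  set a' : ℕ → ℝ := fun n =>
      (Nat.card {w : Fin n → Fin d // StableVertex (σ ^ j) n w} : ℝ) /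
      (Fintype.card (Fin n → Fin d) : ℝ) with ha'
  have hd0 : (0 : ℝ) < d := by positivity
  have hcardfun : ∀ n : ℕ, (Fintype.card (Fin n → Fin d) : ℝ) = (d : ℝ) ^ n := by
    intro n; simp [Fintype.card_fun]
  have hub : ∀ n : ℕ, a' n ≤ 1 := by
    intro n
    rw [ha']
    have h1 : Nat.card {w : Fin n → Fin d // StableVertex (σ ^ j) n w} ≤
        Fintype.card (Fin n → Fin d) := by
      rw [← Nat.card_eq_fintype_card]
      exact Nat.card_le_card_of_injective Subtype.val Subtype.val_injective
    have h2 : (0 : ℝ) < (Fintype.card (Fin n → Fin d) : ℝ) := by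
      rw [hcardfun n]; positivity
    rw [div_le_one h2]
    exact_mod_cast h1
  have hlb : ∀ n : ℕ, j ≤ n → a (n - j) ≤ a' n := by
    intro n hn
    obtain ⟨n0, rfl⟩ : ∃ n0, n = n0 + j := ⟨n - j, by omega⟩
    have hsub : n0 + j - j = n0 := by omega
    rw [hsub]
    simp only [ha, ha']
    have hcle := card_le_pow hd hσ hj n0
    have hcle' : ((Nat.card {w : Fin n0 → Fin d // StableVertex σ n0 w} : ℝ) * (d : ℝ) ^ j)
        ≤ (Nat.card {w : Fin (n0 + j) → Fin d // StableVertex (σ ^ j) (n0 + j) w} : ℝ) := by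
      exact_mod_cast hcle
    rw [hcardfun, hcardfun]
    rw [div_le_div_iff₀ (by positivity) (by positivity)]
    calc (Nat.card {w : Fin n0 → Fin d // StableVertex σ n0 w} : ℝ) * (d : ℝ) ^ (n0 + j)
        = ((Nat.card {w : Fin n0 → Fin d // StableVertex σ n0 w} : ℝ) * (d : ℝ) ^ j)
          * (d : ℝ) ^ n0 := by ring
      _ ≤ (Nat.card {w : Fin (n0 + j) → Fin d // StableVertex (σ ^ j) (n0 + j) w} : ℝ)
          * (d : ℝ) ^ n0 := by
            exact mul_le_mul_of_nonneg_right hcle' (by positivity)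
  have hcomp : Filter.Tendsto (fun n : ℕ => a (n - j)) Filter.atTop (nhds 1) :=
    hset.comp (Filter.tendsto_sub_atTop_nat j)
  refine tendsto_of_tendsto_of_tendsto_of_le_of_le' hcomp tendsto_const_nhds ?_ ?_
  · filter_upwards [Filter.eventually_atTop.mpr ⟨j, fun n hn => hlb n hn⟩] with n hn
    exact hn
  · filter_upwards with n
    exact hub n

end Settled17Aux

/-- An automorphism `h` of the `d`-ary rooted tree is settled if and only if
`h ^ k` is settled for every nonzero integer `k`; and likewise with "settled"
replaced by "strongly settled". -/
theorem settled_stmt17 (d : ℕ) (hd : 2 ≤ d)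
    (h : Equiv.Perm (Bd (fun _ => d))) (hh : h ∈ treeAutGroup (fun _ => d)) :
    (SettledAut h ↔ ∀ k : ℤ, k ≠ 0 → SettledAut (h ^ k)) ∧
    (StronglySettledAut h ↔ ∀ k : ℤ, k ≠ 0 → StronglySettledAut (h ^ k)) := by
  have hcast_pos : ∀ k : ℤ, 0 < k → h ^ k = h ^ k.toNat := by
    intro k hk
    rw [← zpow_natCast h, Int.toNat_of_nonneg hk.le]
  have hcast_neg : ∀ k : ℤ, k < 0 → h ^ k = (h ^ (-k).toNat)⁻¹ := by
    intro k hk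
    rw [← zpow_natCast h, Int.toNat_of_nonneg (by omega : (0:ℤ) ≤ -k), ← zpow_neg, neg_neg]
  constructor
  · constructor
    · intro hset k hk
      rcases lt_trichotomy k 0 with hneg | rfl | hpos
      · have hj : 1 ≤ (-k).toNat := by omega
        have h1 : SettledAut (h ^ (-k).toNat) := Settled17Aux.settled_pow hd hh hj hset
        have h2 : SettledAut ((h ^ (-k).toNat)⁻¹) :=
          Settled17Aux.settledAut_inv (pow_mem hh _) h1
        rw [hcast_neg k hneg]
        exact h2
      · exact absurd rfl hk
      · have hj : 1 ≤ k.toNat := by omega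
        rw [hcast_pos k hpos]
        exact Settled17Aux.settled_pow hd hh hj hset
    · intro H
      have := H 1 one_ne_zero
      simpa using this
  · constructor
    · intro hset k hk
      rcases lt_trichotomy k 0 with hneg | rfl | hpos
      · have hj : 1 ≤ (-k).toNat := by omega
        have h1 : StronglySettledAut (h ^ (-k).toNat) :=
          Settled17Aux.stronglySettled_pow hd hh hj hset
        have h2 : StronglySettledAut ((h ^ (-k).toNat)⁻¹) :=
          Settled17Aux.stronglySettledAut_inv (pow_mem hh _) h1
        rw [hcast_neg k hneg]
        exact h2
      · exact absurd rfl hk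
      · have hj : 1 ≤ k.toNat := by omega
        rw [hcast_pos k hpos]
        exact Settled17Aux.stronglySettled_pow hd hh hj hset
    · intro H
      have := H 1 one_ne_zero
      simpa using this
end
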